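/- arXiv:1905.04955 — 2 statements merged into one kernel-verified Lean document; each statement's English description precedes it below -/
import Mathlib

section
/- If a random variable X satisfies the tail bound P(|X| ≥ x) ≤ 2·exp(−(x/K)^{1/θ}) for all x ≥ 0, where K > 0 and θ > 0, then there exists a constant C > 0 such that the moment bound (E[|X|^k])^{1/k} ≤ C·k^θ holds for all real k ≥ 1. -/
open MeasureTheory Real Set

lemma aux_gamma_le_rpow_self {y : ℝ} (hy : 2 ≤ y) : Real.Gamma y ≤ y ^ y := by
  have hy0 : (0:ℝ) ≤ y := by linarith
  have hy1 : (1:ℝ) ≤ y := by linarith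
  have h2 : 2 ≤ ⌈y⌉₊ := by
    have : (2:ℝ) ≤ (⌈y⌉₊ : ℝ) := hy.trans (Nat.le_ceil y)
    exact_mod_cast this
  obtain ⟨n, hn⟩ : ∃ n : ℕ, ⌈y⌉₊ = n + 2 := ⟨⌈y⌉₊ - 2, by omega⟩
  have hceil : (⌈y⌉₊ : ℝ) < y + 1 := Nat.ceil_lt_add_one hy0
  have hn1y : ((n:ℝ) + 1) ≤ y := by
    rw [hn] at hceil; push_cast at hceil; linarith
  have hmono : Real.Gamma y ≤ Real.Gamma (⌈y⌉₊ : ℝ) := by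
    refine Real.Gamma_strictMonoOn_Ici.monotoneOn hy ?_ (Nat.le_ceil y)
    exact hy.trans (Nat.le_ceil y)
  have hΓn : Real.Gamma (⌈y⌉₊ : ℝ) = ((n+1).factorial : ℝ) := by
    rw [hn]
    have : ((n + 2 : ℕ) : ℝ) = ((n+1 : ℕ) : ℝ) + 1 := by push_cast; ring
    rw [this, Real.Gamma_nat_eq_factorial]
  have hfact : ((n+1).factorial : ℝ) ≤ ((n:ℝ)+1) ^ (n+1) := by
    have := Nat.factorial_le_pow (n+1)
    exact_mod_cast this
  have hpow : ((n:ℝ)+1) ^ (n+1) ≤ y ^ (n+1) := by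
    apply pow_le_pow_left₀ (by positivity) hn1y
  have hrpow : y ^ (n+1) = y ^ ((n+1 : ℕ) : ℝ) := (Real.rpow_natCast y (n+1)).symm
  have hfin : y ^ ((n+1:ℕ):ℝ) ≤ y ^ y := by
    apply Real.rpow_le_rpow_of_exponent_le hy1
    push_cast; linarith
  calc Real.Gamma y ≤ ((n+1).factorial : ℝ) := hmono.trans_eq hΓn
    _ ≤ ((n:ℝ)+1)^(n+1) := hfact
    _ ≤ y ^ (n+1) := hpow
    _ ≤ y ^ y := hrpow.trans_le hfin

lemma aux_gamma_le (θ : ℝ) (hθ : 0 < θ) {y : ℝ} (hy : θ ≤ y) :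
    Real.Gamma y ≤ max (Real.Gamma θ) 1 + y ^ y := by
  have hy0 : 0 < y := lt_of_lt_of_le hθ hy
  rcases le_or_gt y 2 with h2 | h2
  · have hseg : Real.Gamma y ≤ max (Real.Gamma θ) (Real.Gamma 2) := by
      refine Real.convexOn_Gamma.le_on_segment hθ (by norm_num) ?_
      rw [segment_eq_Icc (hy.trans h2)]
      exact ⟨hy, h2⟩
    rw [Real.Gamma_two] at hseg
    have : (0:ℝ) ≤ y ^ y := Real.rpow_nonneg hy0.le y
    linarith
  · have := aux_gamma_le_rpow_self h2.le
    have hm : (0:ℝ) ≤ max (Real.Gamma θ) 1 := le_max_of_le_right zero_le_one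
    linarith

lemma aux_integrableOn {p q b : ℝ} (hp : 0 < p) (hq : -1 < q) (hb : 0 < b) :
    IntegrableOn (fun x : ℝ => x ^ q * Real.exp (-b * x ^ p)) (Set.Ioi 0) := by
  have hq1 : 0 < q + 1 := by linarith
  have h1 : IntegrableOn (fun y : ℝ => y ^ ((q+1)/p - 1) * Real.exp (-b * y)) (Set.Ioi 0) := by
    have := integrableOn_rpow_mul_exp_neg_mul_rpow (s := (q+1)/p - 1) (p := 1) (b := b)
      (by have := div_pos hq1 hp; linarith) one_pos hb
    simpa [Real.rpow_one] using this
  have h2 := (integrableOn_Ioi_comp_rpow_iff'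
      (fun y : ℝ => y ^ ((q+1)/p - 1) * Real.exp (-b * y)) hp.ne').mpr h1
  refine h2.congr_fun (fun x hx => ?_) measurableSet_Ioi
  have hx0 : (0:ℝ) < x := hx
  dsimp only
  rw [smul_eq_mul, ← Real.rpow_mul hx0.le, ← mul_assoc, ← Real.rpow_add hx0]
  have he : p - 1 + p * ((q+1)/p - 1) = q := by field_simp; ring
  rw [he]

lemma aux_key {K θ k : ℝ} (hK : 0 < K) (hθ : 0 < θ) (hk : 1 ≤ k) :
    k * (2 * (K ^ k * θ * Real.Gamma (k * θ))) ≤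
      ((4 * max θ 1 * Real.exp 1 * K *
        max (max (Real.Gamma θ) 1) (max (θ ^ θ) 1)) * k ^ θ) ^ k := by
  have hk0 : (0:ℝ) < k := lt_of_lt_of_le one_pos hk
  set D := max θ 1 with hD
  set F := max (max (Real.Gamma θ) 1) (max (θ ^ θ) 1) with hF
  have hD1 : (1:ℝ) ≤ D := le_max_right _ _
  have hF1 : (1:ℝ) ≤ F := le_trans (le_max_right _ _) (le_max_left _ _)
  have hkθ1 : (1:ℝ) ≤ k ^ θ := by
    have := Real.rpow_le_rpow zero_le_one hk hθ.le
    rwa [Real.one_rpow] at this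
  have hkθk1 : (1:ℝ) ≤ (k ^ θ) ^ k := by
    have := Real.rpow_le_rpow zero_le_one hkθ1 hk0.le
    rwa [Real.one_rpow] at this
  have hFk : F ≤ F ^ k := by
    calc F = F ^ (1:ℝ) := (Real.rpow_one F).symm
    _ ≤ F ^ k := Real.rpow_le_rpow_of_exponent_le hF1 hk
  have hΓ : Real.Gamma (k * θ) ≤ 2 * F ^ k * (k ^ θ) ^ k := by
    have hθk : θ ≤ k * θ := by nlinarith
    have h1 := aux_gamma_le θ hθ hθk
    have hM : max (Real.Gamma θ) 1 ≤ F ^ k * (k ^ θ) ^ k := by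
      calc max (Real.Gamma θ) 1 ≤ F := le_max_left _ _
      _ = F * 1 := (mul_one F).symm
      _ ≤ F ^ k * (k ^ θ) ^ k := by
          apply mul_le_mul hFk hkθk1 zero_le_one (by positivity)
    have hP : (k * θ) ^ (k * θ) ≤ F ^ k * (k ^ θ) ^ k := by
      have e1 : (k * θ) ^ (k * θ) = k ^ (k * θ) * θ ^ (k * θ) :=
        Real.mul_rpow hk0.le hθ.le
      have e2 : k ^ (k * θ) = (k ^ θ) ^ k := by
        rw [mul_comm k θ, Real.rpow_mul hk0.le]
      have e3 : θ ^ (k * θ) = (θ ^ θ) ^ k := by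
        rw [mul_comm k θ, Real.rpow_mul hθ.le]
      have e4 : (θ ^ θ) ^ k ≤ F ^ k := by
        apply Real.rpow_le_rpow (by positivity) (le_trans (le_max_left _ _) (le_max_right _ _)) hk0.le
      calc (k * θ) ^ (k * θ) = (k ^ θ) ^ k * (θ ^ θ) ^ k := by rw [e1, e2, e3]
      _ ≤ (k ^ θ) ^ k * F ^ k := by
          apply mul_le_mul_of_nonneg_left e4 (by positivity)
      _ = F ^ k * (k ^ θ) ^ k := by ring
    calc Real.Gamma (k * θ) ≤ max (Real.Gamma θ) 1 + (k * θ) ^ (k * θ) := h1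
    _ ≤ F ^ k * (k ^ θ) ^ k + F ^ k * (k ^ θ) ^ k := add_le_add hM hP
    _ = 2 * F ^ k * (k ^ θ) ^ k := by ring
  have hΓ0 : 0 < Real.Gamma (k * θ) := Real.Gamma_pos_of_pos (by positivity)
  calc k * (2 * (K ^ k * θ * Real.Gamma (k * θ)))
      ≤ k * (2 * (K ^ k * θ * (2 * F ^ k * (k ^ θ) ^ k))) := by
        gcongr
    _ = (4 * θ * k) * (K ^ k * (F ^ k * (k ^ θ) ^ k)) := by ring
    _ ≤ (4 ^ k * D ^ k * Real.exp 1 ^ k) * (K ^ k * (F ^ k * (k ^ θ) ^ k)) := by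
        apply mul_le_mul_of_nonneg_right ?_ (by positivity)
        have h4 : (4:ℝ) ≤ 4 ^ k := by
          calc (4:ℝ) = 4 ^ (1:ℝ) := (Real.rpow_one 4).symm
          _ ≤ 4 ^ k := Real.rpow_le_rpow_of_exponent_le (by norm_num) hk
        have hDk : θ ≤ D ^ k := by
          calc θ ≤ D := le_max_left _ _
          _ = D ^ (1:ℝ) := (Real.rpow_one D).symm
          _ ≤ D ^ k := Real.rpow_le_rpow_of_exponent_le hD1 hk
        have hek : k ≤ Real.exp 1 ^ k := by
          rw [Real.exp_one_rpow]
          linarith [Real.add_one_le_exp k]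
        calc 4 * θ * k ≤ (4 ^ k * D ^ k) * (Real.exp 1 ^ k) := by
              apply mul_le_mul (mul_le_mul h4 hDk hθ.le (by positivity)) hek hk0.le (by positivity)
        _ = 4 ^ k * D ^ k * Real.exp 1 ^ k := by ring
    _ = ((4 * D * Real.exp 1 * K * F) * k ^ θ) ^ k := by
        rw [Real.mul_rpow (by positivity) (by positivity),
          Real.mul_rpow (by positivity) (by positivity),
          Real.mul_rpow (by positivity) (by positivity),
          Real.mul_rpow (by positivity) (by positivity),
          Real.mul_rpow (by positivity) (by positivity)]
        ring

theorem tail_implies_moments {Ω : Type*} [MeasurableSpace Ω] (μ : Measure Ω)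
    [IsProbabilityMeasure μ] (X : Ω → ℝ) (hX : Measurable X)
    (K θ : ℝ) (hK : 0 < K) (hθ : 0 < θ)
    (h : ∀ x : ℝ, 0 ≤ x → μ {ω | x ≤ |X ω|} ≤ ENNReal.ofReal (2 * Real.exp (-(x / K) ^ (1 / θ)))) :
    ∃ C : ℝ, 0 < C ∧ ∀ k : ℝ, 1 ≤ k →
      (∫⁻ ω, ENNReal.ofReal (|X ω| ^ k) ∂μ) ^ (1 / k) ≤ ENNReal.ofReal (C * k ^ θ) := by
  set C : ℝ := 4 * max θ 1 * Real.exp 1 * K * max (max (Real.Gamma θ) 1) (max (θ ^ θ) 1) with hCdef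
  have hC : 0 < C := by
    have h1 : (0:ℝ) < max θ 1 := lt_max_of_lt_right one_pos
    have h2 : (0:ℝ) < max (max (Real.Gamma θ) 1) (max (θ ^ θ) 1) :=
      lt_max_of_lt_right (lt_max_of_lt_right one_pos)
    have := Real.exp_pos 1
    positivity
  refine ⟨C, hC, fun k hk => ?_⟩
  have hk0 : (0:ℝ) < k := lt_of_lt_of_le one_pos hk
  have hp : (0:ℝ) < 1 / θ := by positivity
  set b : ℝ := K⁻¹ ^ (1 / θ) with hbdef
  have hb : 0 < b := by positivity
  -- Step A: layer cake
  have hlayer := MeasureTheory.lintegral_rpow_eq_lintegral_meas_le_mul μ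
    (f := fun ω => |X ω|) (ae_of_all μ fun ω => abs_nonneg (X ω))
    hX.abs.aemeasurable hk0
  -- Step B: bound inner integral
  have hmono : ∫⁻ t in Set.Ioi (0:ℝ), μ {a | t ≤ |X a|} * ENNReal.ofReal (t ^ (k - 1)) ≤
      ∫⁻ t in Set.Ioi (0:ℝ),
        ENNReal.ofReal (2 * (t ^ (k - 1) * Real.exp (-b * t ^ (1 / θ)))) := by
    apply setLIntegral_mono
    · apply Measurable.ennreal_ofReal
      fun_prop
    · intro t ht
      have ht0 : (0:ℝ) < t := ht
      have hexp : -(t / K) ^ (1 / θ) = -b * t ^ (1 / θ) := by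
        rw [div_eq_mul_inv, Real.mul_rpow ht0.le (inv_nonneg.2 hK.le)]
        ring
      calc μ {a | t ≤ |X a|} * ENNReal.ofReal (t ^ (k - 1))
          ≤ ENNReal.ofReal (2 * Real.exp (-(t / K) ^ (1 / θ))) *
            ENNReal.ofReal (t ^ (k - 1)) := mul_le_mul_left (h t ht0.le) _
        _ = ENNReal.ofReal (2 * (t ^ (k - 1) * Real.exp (-b * t ^ (1 / θ)))) := by
            rw [← ENNReal.ofReal_mul (by positivity), hexp]
            ring_nf
  -- Step C: integrability and conversion to Bochner integral
  have hInt : IntegrableOn (fun t : ℝ => 2 * (t ^ (k - 1) * Real.exp (-b * t ^ (1 / θ))))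
      (Set.Ioi 0) := (aux_integrableOn hp (by linarith) hb).const_mul 2
  have hEq : ∫⁻ t in Set.Ioi (0:ℝ),
      ENNReal.ofReal (2 * (t ^ (k - 1) * Real.exp (-b * t ^ (1 / θ)))) =
      ENNReal.ofReal (∫ t in Set.Ioi (0:ℝ),
        2 * (t ^ (k - 1) * Real.exp (-b * t ^ (1 / θ)))) := by
    rw [MeasureTheory.ofReal_integral_eq_lintegral_ofReal hInt]
    filter_upwards [ae_restrict_mem measurableSet_Ioi] with t ht
    have ht0 : (0:ℝ) < t := ht
    have := Real.rpow_nonneg ht0.le (k - 1)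
    positivity
  -- Step D: value of the integral
  have hval : ∫ t in Set.Ioi (0:ℝ), 2 * (t ^ (k - 1) * Real.exp (-b * t ^ (1 / θ))) =
      2 * (K ^ k * (1 / (1 / θ)) * Real.Gamma ((k - 1 + 1) / (1 / θ))) := by
    rw [MeasureTheory.integral_const_mul,
      integral_rpow_mul_exp_neg_mul_rpow hp (by linarith) hb]
    congr 1
    have hbpow : b ^ (-(k - 1 + 1) / (1 / θ)) = K ^ k := by
      rw [hbdef, ← Real.rpow_mul (inv_nonneg.2 hK.le)]
      have : 1 / θ * (-(k - 1 + 1) / (1 / θ)) = -k := by field_simp; ring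
      rw [this, Real.inv_rpow hK.le, Real.rpow_neg hK.le, inv_inv]
    rw [hbpow]
  have hsimp : (k - 1 + 1) / (1 / θ) = k * θ := by field_simp; ring
  have h1θ : 1 / (1 / θ) = θ := one_div_one_div θ
  -- Assemble
  have hbound : (∫⁻ ω, ENNReal.ofReal (|X ω| ^ k) ∂μ) ≤
      ENNReal.ofReal ((C * k ^ θ) ^ k) := by
    rw [hlayer]
    calc ENNReal.ofReal k * ∫⁻ t in Set.Ioi (0:ℝ),
        μ {a | t ≤ |X a|} * ENNReal.ofReal (t ^ (k - 1))
        ≤ ENNReal.ofReal k * ENNReal.ofReal (∫ t in Set.Ioi (0:ℝ),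
            2 * (t ^ (k - 1) * Real.exp (-b * t ^ (1 / θ)))) := by
          rw [← hEq]
          exact mul_le_mul_right hmono _
      _ = ENNReal.ofReal (k * (2 * (K ^ k * θ * Real.Gamma (k * θ)))) := by
          rw [hval, hsimp, h1θ, ← ENNReal.ofReal_mul hk0.le]
      _ ≤ ENNReal.ofReal ((C * k ^ θ) ^ k) :=
          ENNReal.ofReal_le_ofReal (aux_key hK hθ hk)
  have hfinal := ENNReal.rpow_le_rpow hbound (by positivity : (0:ℝ) ≤ 1 / k)
  rwa [ENNReal.ofReal_rpow_of_nonneg (by positivity) (by positivity),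
    ← Real.rpow_mul (by positivity), mul_one_div, div_self hk0.ne',
    Real.rpow_one] at hfinal
end

section
/- Let X₁, …, X_n be identically distributed random variables with (E[|X_i|^k])^{1/k} ≤ K·k^θ for all k ≥ 1, where K > 0 and θ > 0. Set K_θ = e·K. Then for all x ≥ n·K_θ, P(|X₁ + ⋯ + X_n| ≥ x) ≤ exp(−(x/(n·K_θ))^{1/θ}). -/
open MeasureTheory Real ProbabilityTheory

theorem subWeibull_sum_concentration {Ω : Type*} [MeasurableSpace Ω] (μ : Measure Ω)
    [IsProbabilityMeasure μ] (n : ℕ) (X : Fin n → Ω → ℝ) (hX : ∀ i, Measurable (X i))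
    (K θ : ℝ) (hK : 0 < K) (hθ : 0 < θ)
    (hid : ∀ i j, IdentDistrib (X i) (X j) μ μ)
    (h : ∀ i, ∀ k : ℝ, 1 ≤ k →
      (∫⁻ ω, ENNReal.ofReal (|X i ω| ^ k) ∂μ) ^ (1 / k) ≤ ENNReal.ofReal (K * k ^ θ)) :
    ∀ x : ℝ, (n : ℝ) * (Real.exp 1 * K) ≤ x →
      μ {ω | x ≤ |∑ i, X i ω|} ≤
        ENNReal.ofReal (Real.exp (-(x / ((n : ℝ) * (Real.exp 1 * K))) ^ (1 / θ))) := by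
  intro x hx
  rcases Nat.eq_zero_or_pos n with hn | hn
  · subst hn
    simp only [Nat.cast_zero, zero_mul, Finset.univ_eq_empty, Finset.sum_empty,
      abs_zero, div_zero] at hx ⊢
    rw [Real.zero_rpow (by positivity : (1:ℝ)/θ ≠ 0), neg_zero, Real.exp_zero,
      ENNReal.ofReal_one]
    exact prob_le_one
  · set c : ℝ := (n : ℝ) * (Real.exp 1 * K) with hc_def
    have hn0 : (n : ℝ) ≠ 0 := Nat.cast_ne_zero.mpr hn.ne'
    have hc : 0 < c := by positivity
    have hx0 : 0 < x := lt_of_lt_of_le hc hx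
    set k : ℝ := (x / c) ^ (1 / θ) with hk_def
    have hxc1 : 1 ≤ x / c := (one_le_div hc).mpr hx
    have hk1 : 1 ≤ k := Real.one_le_rpow hxc1 (by positivity)
    have hk0 : 0 < k := lt_of_lt_of_le one_pos hk1
    have hkθ : k ^ θ = x / c := by
      rw [hk_def, ← Real.rpow_mul (by positivity), one_div_mul_cancel hθ.ne',
        Real.rpow_one]
    set p : ENNReal := ENNReal.ofReal k with hp_def
    have hp0 : p ≠ 0 := by
      simp [hp_def, ENNReal.ofReal_eq_zero, not_le, hk0]
    have hpt : p ≠ ⊤ := ENNReal.ofReal_ne_top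
    have hptoReal : p.toReal = k := ENNReal.toReal_ofReal hk0.le
    have hp1 : 1 ≤ p := by
      rw [hp_def, ← ENNReal.ofReal_one]
      exact ENNReal.ofReal_le_ofReal hk1
    -- moment bound for each X i
    have hmom : ∀ i, eLpNorm (X i) p μ ≤ ENNReal.ofReal (K * k ^ θ) := by
      intro i
      rw [eLpNorm_eq_lintegral_rpow_enorm_toReal hp0 hpt, hptoReal]
      have heq : ∀ ω, (‖X i ω‖₊ : ENNReal) ^ k = ENNReal.ofReal (|X i ω| ^ k) := by
        intro ω
        rw [← enorm_eq_nnnorm, ← ofReal_norm, Real.norm_eq_abs,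
          ENNReal.ofReal_rpow_of_nonneg (abs_nonneg _) hk0.le]
      simp_rw [enorm_eq_nnnorm, heq]
      exact h i k hk1
    -- sum bound
    have hSmeas : Measurable (fun ω => ∑ i, X i ω) := by
      exact Finset.measurable_sum _ fun i _ => hX i
    have hsum : eLpNorm (fun ω => ∑ i, X i ω) p μ ≤ ENNReal.ofReal (x / Real.exp 1) := by
      calc eLpNorm (fun ω => ∑ i, X i ω) p μ = eLpNorm (∑ i, X i) p μ := by
            congr 1; ext ω; simp
        _ ≤ ∑ i : Fin n, eLpNorm (X i) p μ :=
            eLpNorm_sum_le (fun i _ => (hX i).aestronglyMeasurable) hp1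
        _ ≤ ∑ _i : Fin n, ENNReal.ofReal (K * k ^ θ) := Finset.sum_le_sum fun i _ => hmom i
        _ = (n : ENNReal) * ENNReal.ofReal (K * k ^ θ) := by
            simp [Finset.sum_const, nsmul_eq_mul]
        _ = ENNReal.ofReal ((n : ℝ) * (K * k ^ θ)) := by
            rw [← ENNReal.ofReal_natCast n, ← ENNReal.ofReal_mul (by positivity)]
        _ = ENNReal.ofReal (x / Real.exp 1) := by
            congr 1
            rw [hkθ, hc_def]
            field_simp
    -- Markov
    have hset : {ω | x ≤ |∑ i, X i ω|} =
        {ω | ENNReal.ofReal x ≤ (‖∑ i, X i ω‖₊ : ENNReal)} := by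
      ext ω
      simp only [Set.mem_setOf_eq, ← enorm_eq_nnnorm, ← ofReal_norm, Real.norm_eq_abs,
        ENNReal.ofReal_le_ofReal_iff (abs_nonneg _)]
    have hmarkov := meas_ge_le_mul_pow_eLpNorm_enorm μ hp0 hpt hSmeas.aestronglyMeasurable
      (ε := ENNReal.ofReal x) (by simp [ENNReal.ofReal_eq_zero, not_le, hx0]) (by simp)
    rw [hset]
    refine hmarkov.trans ?_
    rw [hptoReal]
    calc (ENNReal.ofReal x)⁻¹ ^ k * eLpNorm (fun ω => ∑ i, X i ω) p μ ^ k
        ≤ (ENNReal.ofReal x)⁻¹ ^ k * ENNReal.ofReal (x / Real.exp 1) ^ k := by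
          gcongr
      _ = ENNReal.ofReal (x⁻¹ ^ k) * ENNReal.ofReal ((x / Real.exp 1) ^ k) := by
          rw [← ENNReal.ofReal_inv_of_pos hx0,
            ENNReal.ofReal_rpow_of_nonneg (by positivity) hk0.le,
            ENNReal.ofReal_rpow_of_nonneg (by positivity) hk0.le]
      _ = ENNReal.ofReal (Real.exp (-(x / c) ^ (1 / θ))) := by
          rw [← ENNReal.ofReal_mul (by positivity), ← Real.mul_rpow (by positivity)
            (by positivity)]
          congr 1
          have : x⁻¹ * (x / Real.exp 1) = Real.exp (-1) := by
            rw [Real.exp_neg]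
            field_simp
          rw [this, ← Real.exp_mul, ← hk_def, neg_one_mul]
end
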